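/- arXiv:1509.03316 — 2 statements merged into one kernel-verified Lean document; each statement's English description precedes it below -/
import Mathlib

section
/- Let r be a noncommutative rational expression in the variables ⋃_i X^(i). Suppose (a', a^(2),…,a^(G)) lies in the mp-domain of r at level (n'_1, n_2,…,n_G) and (a'', a^(2),…,a^(G)) lies in the mp-domain of r at level (n''_1, n_2,…,n_G), where a' ∈ Mat_{n'_1}(k)^{g_1} and a'' ∈ Mat_{n''_1}(k)^{g_1}. Then (a'⊕a'', a^(2),…,a^(G)) lies in the mp-domain of r at level (n'_1+n''_1, n_2,…,n_G), where a'⊕a'' denotes the componentwise block-diagonal direct sum, and under the natural block identification of Mat_{(n'_1+n''_1)·n_2⋯n_G}(k) one has r(a'⊕a'', a^(2),…,a^(G))^mp = r(a', a^(2),…,a^(G))^mp ⊕ r(a'', a^(2),…,a^(G))^mp. -/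
/-!
Noncommutative rational expressions and multipartite (mp) evaluations,
following "Multipartite rational functions" by Klep, Vinnikov, Volčič.
-/

/-- Formal noncommutative rational expressions over `k` in variables `X`. -/
inductive RatExpr (k : Type*) (X : Type*) : Type _
  | const : k → RatExpr k X
  | var : X → RatExpr k X
  | add : RatExpr k X → RatExpr k X → RatExpr k X
  | mul : RatExpr k X → RatExpr k X → RatExpr k X
  | inv : RatExpr k X → RatExpr k X

open Classical in
/-- Partial evaluation of a rational expression in a `k`-algebra `R`,
given an assignment `f` of the variables. An inverse is evaluated only
when the evaluation of the sub-expression is invertible (a unit) in `R`. -/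
noncomputable def RatExpr.eval {k X R : Type*} [CommRing k] [Ring R] [Algebra k R]
    (f : X → R) : RatExpr k X → Option R
  | .const c => some (algebraMap k R c)
  | .var x => some (f x)
  | .add r s => (r.eval f).bind fun a => (s.eval f).map fun b => a + b
  | .mul r s => (r.eval f).bind fun a => (s.eval f).map fun b => a * b
  | .inv r => (r.eval f).bind fun a => if IsUnit a then some (Ring.inverse a) else none

/-- `tau n i A = I ⊗ ⋯ ⊗ A ⊗ ⋯ ⊗ I`, the Kronecker product with `A` in the `i`-th
slot and identity matrices elsewhere, realized on the index set `∀ j, Fin (n j)`. -/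
def tau {k : Type*} [CommRing k] {ι : Type*} [Fintype ι] [DecidableEq ι]
    (n : ι → ℕ) (i : ι) (A : Matrix (Fin (n i)) (Fin (n i)) k) :
    Matrix (∀ j, Fin (n j)) (∀ j, Fin (n j)) k :=
  Matrix.of fun α β =>
    A (α i) (β i) * ∏ j ∈ Finset.univ.erase i, (if α j = β j then (1 : k) else 0)

/-- The mp-evaluation of a rational expression in the variables `Σ i, Fin (g i)`
at the tuple `a` at level `n`:  `X^(i)_j` is sent to `tau n i (a i j)`.
The result is `none` exactly when `a` is not in the mp-domain of `r` at level `n`. -/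
noncomputable def mpEval {k : Type*} [Field k] {ι : Type*} [Fintype ι] [DecidableEq ι]
    (g n : ι → ℕ) (r : RatExpr k (Σ i : ι, Fin (g i)))
    (a : ∀ i, Fin (g i) → Matrix (Fin (n i)) (Fin (n i)) k) :
    Option (Matrix (∀ j, Fin (n j)) (∀ j, Fin (n j)) k) :=
  r.eval fun v => tau n v.1 (a v.1 v.2)

section FirstPartSpecial

variable {k : Type*} [Field k] {G : ℕ} (g₁ : ℕ) (g n : Fin G → ℕ)

/-- `tau` for the distinguished first tensor factor, whose index type is `d`:
`A ⊗ I_{n_2} ⊗ ⋯ ⊗ I_{n_G}`. -/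
def tauFst {d : Type*} [Fintype d] [DecidableEq d] (A : Matrix d d k) :
    Matrix (d × ∀ j, Fin (n j)) (d × ∀ j, Fin (n j)) k :=
  Matrix.of fun α β => A α.1 β.1 * (if α.2 = β.2 then (1 : k) else 0)

/-- `tau` for the remaining tensor factors, with the distinguished first factor of index
type `d`: `I_d ⊗ I ⊗ ⋯ ⊗ A ⊗ ⋯ ⊗ I` with `A` in slot `i` of the tail. -/
def tauTail {d : Type*} [Fintype d] [DecidableEq d] (i : Fin G)
    (A : Matrix (Fin (n i)) (Fin (n i)) k) :
    Matrix (d × ∀ j, Fin (n j)) (d × ∀ j, Fin (n j)) k :=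
  Matrix.of fun α β => (if α.1 = β.1 then (1 : k) else 0) * A (α.2 i) (β.2 i) *
    ∏ j ∈ Finset.univ.erase i, (if α.2 j = β.2 j then (1 : k) else 0)

/-- mp-evaluation of a rational expression in the variables
`X^(1) ∪ (X^(2) ∪ ⋯ ∪ X^(G))`, where the first part is evaluated at matrices indexed by a
type `d` and the remaining parts at matrices of sizes `n_i`. -/
noncomputable def mpEvalFst (r : RatExpr k ((Fin g₁) ⊕ (Σ i : Fin G, Fin (g i))))
    {d : Type*} [Fintype d] [DecidableEq d]
    (a₁ : Fin g₁ → Matrix d d k)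
    (a : ∀ i, Fin (g i) → Matrix (Fin (n i)) (Fin (n i)) k) :
    Option (Matrix (d × ∀ j, Fin (n j)) (d × ∀ j, Fin (n j)) k) :=
  r.eval (Sum.elim (fun j => tauFst n (a₁ j)) (fun v => tauTail n v.1 (a v.1 v.2)))

end FirstPartSpecial

/-- The natural block identification
`Fin (n₁' + n₁'') × Π ≃ (Fin n₁' × Π) ⊕ (Fin n₁'' × Π)`. -/
def blockEquiv {G : ℕ} (n : Fin G → ℕ) (n₁' n₁'' : ℕ) :
    (Fin (n₁' + n₁'') × ∀ j, Fin (n j)) ≃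
      ((Fin n₁' × ∀ j, Fin (n j)) ⊕ (Fin n₁'' × ∀ j, Fin (n j))) :=
  (Equiv.prodCongr finSumFinEquiv.symm (Equiv.refl _)).trans
    (Equiv.sumProdDistrib _ _ _)


section Aux

/-- `fromBlocks` as an algebra hom from the product ring. -/
def fromBlocksAlgHom (k : Type*) [CommRing k] (d d' : Type*) [Fintype d] [Fintype d']
    [DecidableEq d] [DecidableEq d'] :
    (Matrix d d k × Matrix d' d' k) →ₐ[k] Matrix (d ⊕ d') (d ⊕ d') k where
  toFun p := Matrix.fromBlocks p.1 0 0 p.2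
  map_one' := Matrix.fromBlocks_one
  map_mul' p q := by simp [Matrix.fromBlocks_multiply]
  map_zero' := by simp
  map_add' p q := by simp [Matrix.fromBlocks_add]
  commutes' c := by
    ext (i | i) (j | j) <;>
      simp [Matrix.algebraMap_matrix_apply, Matrix.fromBlocks, Matrix.diagonal]

theorem RatExpr.eval_algHom_pair {k X R S T : Type*} [CommRing k] [Ring R] [Ring S] [Ring T]
    [Algebra k R] [Algebra k S] [Algebra k T] (Φ : (R × S) →ₐ[k] T) (f : X → R) (g : X → S) :
    ∀ (r : RatExpr k X) (E1 : R) (E2 : S), r.eval f = some E1 → r.eval g = some E2 →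
      r.eval (fun x => Φ (f x, g x)) = some (Φ (E1, E2)) := by
  intro r
  induction r with
  | const c =>
    intro E1 E2 h1 h2
    simp only [RatExpr.eval, Option.some.injEq] at h1 h2 ⊢
    subst h1; subst h2
    rw [show ((algebraMap k R c, algebraMap k S c) : R × S) = algebraMap k (R × S) c from rfl,
      Φ.commutes]
  | var x =>
    intro E1 E2 h1 h2
    simp only [RatExpr.eval, Option.some.injEq] at h1 h2 ⊢
    subst h1; subst h2; rfl
  | add r s ihr ihs =>
    intro E1 E2 h1 h2
    simp only [RatExpr.eval, Option.bind_eq_some_iff, Option.map_eq_some_iff] at h1 h2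
    obtain ⟨a1, ha1, b1, hb1, rfl⟩ := h1
    obtain ⟨a2, ha2, b2, hb2, rfl⟩ := h2
    have hr := ihr a1 a2 ha1 ha2
    have hs := ihs b1 b2 hb1 hb2
    simp only [RatExpr.eval, hr, hs, Option.bind_some, Option.map_some]
    rw [← map_add]
    rfl
  | mul r s ihr ihs =>
    intro E1 E2 h1 h2
    simp only [RatExpr.eval, Option.bind_eq_some_iff, Option.map_eq_some_iff] at h1 h2
    obtain ⟨a1, ha1, b1, hb1, rfl⟩ := h1
    obtain ⟨a2, ha2, b2, hb2, rfl⟩ := h2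
    have hr := ihr a1 a2 ha1 ha2
    have hs := ihs b1 b2 hb1 hb2
    simp only [RatExpr.eval, hr, hs, Option.bind_some, Option.map_some]
    rw [← map_mul]
    rfl
  | inv r ihr =>
    intro E1 E2 h1 h2
    simp only [RatExpr.eval, Option.bind_eq_some_iff] at h1 h2
    obtain ⟨a1, ha1, h1'⟩ := h1
    obtain ⟨a2, ha2, h2'⟩ := h2
    by_cases hu1 : IsUnit a1
    swap
    · simp [hu1] at h1'
    by_cases hu2 : IsUnit a2
    swap
    · simp [hu2] at h2'
    simp only [hu1, hu2, if_true, Option.some.injEq] at h1' h2'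
    subst h1'; subst h2'
    have hr := ihr a1 a2 ha1 ha2
    obtain ⟨u1, rfl⟩ := hu1
    obtain ⟨u2, rfl⟩ := hu2
    set w : (R × S)ˣ :=
      ⟨((u1 : R), (u2 : S)), ((↑u1⁻¹ : R), (↑u2⁻¹ : S)),
        Prod.ext (by simp) (by simp), Prod.ext (by simp) (by simp)⟩ with hwdef
    have hΦw : Φ ((u1 : R), (u2 : S)) = ((Units.map (Φ : (R × S) →* T) w : Tˣ) : T) := rfl
    have huΦ : IsUnit (Φ ((u1 : R), (u2 : S))) := ⟨Units.map (Φ : (R × S) →* T) w, rfl⟩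
    simp only [RatExpr.eval, hr, Option.bind_some, huΦ, if_true]
    congr 1
    rw [hΦw, Ring.inverse_unit, Units.coe_map_inv,
      Ring.inverse_unit u1, Ring.inverse_unit u2]
    rfl

end Aux


theorem castAdd_ne_natAdd {m n : ℕ} (i : Fin m) (j : Fin n) :
    Fin.castAdd n i ≠ Fin.natAdd m j := by
  intro h
  have := congrArg Fin.val h
  simp only [Fin.coe_castAdd, Fin.coe_natAdd] at this
  omega

theorem natAdd_inj_iff {m n : ℕ} {a b : Fin n} :
    Fin.natAdd m a = Fin.natAdd m b ↔ a = b := by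
  simp [Fin.ext_iff]

theorem natAdd_ne_castAdd {m n : ℕ} (i : Fin m) (j : Fin n) :
    Fin.natAdd m j ≠ Fin.castAdd n i := (castAdd_ne_natAdd i j).symm

/-- Proposition 3.2(1). mp-evaluations respect direct sums in the first
factor: if `(a', a)` and `(a'', a)` are in the mp-domain of `r` at levels `(n₁', n₂, …, n_G)`
and `(n₁'', n₂, …, n_G)` respectively, then the componentwise block-diagonal direct sum
`(a' ⊕ a'', a)` is in the mp-domain at level `(n₁' + n₁'', n₂, …, n_G)` and, under the natural
block identification, the mp-evaluation is the direct sum of the two mp-evaluations. -/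
theorem mp_eval_direct_sum_first_factor {k : Type*} [Field k] [CharZero k]
    {G : ℕ} (g₁ : ℕ) (g n : Fin G → ℕ) (n₁' n₁'' : ℕ)
    (r : RatExpr k ((Fin g₁) ⊕ (Σ i : Fin G, Fin (g i))))
    (a' : Fin g₁ → Matrix (Fin n₁') (Fin n₁') k)
    (a'' : Fin g₁ → Matrix (Fin n₁'') (Fin n₁'') k)
    (a : ∀ i, Fin (g i) → Matrix (Fin (n i)) (Fin (n i)) k)
    (E' : Matrix (Fin n₁' × ∀ j, Fin (n j)) (Fin n₁' × ∀ j, Fin (n j)) k)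
    (E'' : Matrix (Fin n₁'' × ∀ j, Fin (n j)) (Fin n₁'' × ∀ j, Fin (n j)) k)
    (hE' : mpEvalFst g₁ g n r a' a = some E')
    (hE'' : mpEvalFst g₁ g n r a'' a = some E'') :
    mpEvalFst g₁ g n r
      (fun j => Matrix.reindex finSumFinEquiv finSumFinEquiv
        (Matrix.fromBlocks (a' j) 0 0 (a'' j))) a =
    some (Matrix.reindex (blockEquiv n n₁' n₁'').symm (blockEquiv n n₁' n₁'').symm
      (Matrix.fromBlocks E' 0 0 E'')) := by
  
  classical
  set e := blockEquiv n n₁' n₁'' with he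
  set Φ : (Matrix (Fin n₁' × ∀ j, Fin (n j)) (Fin n₁' × ∀ j, Fin (n j)) k ×
      Matrix (Fin n₁'' × ∀ j, Fin (n j)) (Fin n₁'' × ∀ j, Fin (n j)) k) →ₐ[k]
      Matrix (Fin (n₁' + n₁'') × ∀ j, Fin (n j)) (Fin (n₁' + n₁'') × ∀ j, Fin (n j)) k :=
    ((Matrix.reindexAlgEquiv k k e.symm).toAlgHom.comp (fromBlocksAlgHom k _ _)) with hΦ
  unfold mpEvalFst at hE' hE'' ⊢
  have key := RatExpr.eval_algHom_pair Φ _ _ r E' E'' hE' hE''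
  have hΦapp : ∀ (M : Matrix (Fin n₁' × ∀ j, Fin (n j)) (Fin n₁' × ∀ j, Fin (n j)) k)
      (N : Matrix (Fin n₁'' × ∀ j, Fin (n j)) (Fin n₁'' × ∀ j, Fin (n j)) k),
      Φ (M, N) = Matrix.reindex e.symm e.symm (Matrix.fromBlocks M 0 0 N) := by
    intro M N
    simp [hΦ, fromBlocksAlgHom]
  rw [← hΦapp E' E'', ← key]
  congr 1
  funext x
  cases x with
  | inl j =>
    simp only [Sum.elim_inl]
    rw [hΦapp]
    ext ⟨p, π⟩ ⟨q, ρ⟩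
    obtain ⟨x, rfl⟩ := finSumFinEquiv.surjective p
    obtain ⟨y, rfl⟩ := finSumFinEquiv.surjective q
    cases x <;> cases y <;>
      simp [tauFst, he, blockEquiv, Matrix.fromBlocks, Matrix.reindex_apply,
        Matrix.submatrix_apply, Equiv.sumProdDistrib]
  | inr v =>
    simp only [Sum.elim_inr]
    rw [hΦapp]
    ext ⟨p, π⟩ ⟨q, ρ⟩
    obtain ⟨x, rfl⟩ := finSumFinEquiv.surjective p
    obtain ⟨y, rfl⟩ := finSumFinEquiv.surjective q
    cases x <;> cases y <;>
      simp [tauTail, he, blockEquiv, Matrix.fromBlocks, Matrix.reindex_apply,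
        Matrix.submatrix_apply, Equiv.sumProdDistrib, Equiv.apply_eq_iff_eq,
        Prod.ext_iff, castAdd_ne_natAdd, natAdd_ne_castAdd, natAdd_inj_iff]
end

section
/- Let r be a noncommutative rational expression in the variables ⋃_i X^(i). Suppose (a^(1), a^(2),…,a^(G)) lies in the mp-domain of r at level (n_1, n_2,…,n_G) and (a'^(1), a^(2),…,a^(G)) lies in the mp-domain of r at level (n'_1, n_2,…,n_G). Let v ∈ k^{g_1} and for 1 ≤ j ≤ g_1 set A_j = [[a'^(1)_j ⊗ I_{n_1}, v_j · I_{n'_1} ⊗ I_{n_1}], [0, I_{n'_1} ⊗ a^(1)_j]] ∈ Mat_{2 n'_1 n_1}(k) (a 2×2 block matrix with blocks of size n'_1 n_1). Then ((A_1,…,A_{g_1}), a^(2),…,a^(G)) lies in the mp-domain of r at level (2 n'_1 n_1, n_2,…,n_G), and under the natural block identification one has r((A_1,…,A_{g_1}), a^(2),…,a^(G))^mp = [[r((a'^(1)_j ⊗ I_{n_1})_j, a^(2),…,a^(G))^mp, E], [0, r((I_{n'_1} ⊗ a^(1)_j)_j, a^(2),…,a^(G))^mp]], where E is the evaluation of the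 rational expression v·Δ^(1)(r) = Σ_j v_j Δ^(1)_j(r) at the assignment X'^(1)_j ↦ τ_1(a'^(1)_j ⊗ I_{n_1}), X^(1)_j ↦ τ_1(I_{n'_1} ⊗ a^(1)_j), X^(i)_j ↦ τ_i(a^(i)_j) for i ≥ 2 (all in Mat_{n'_1 n_1 · n_2⋯n_G}(k)); in particular all displayed evaluations are defined. -/
open scoped Kronecker

/-- Renaming of variables in a rational expression. -/
def RatExpr.rename {k X Y : Type*} (f : X → Y) : RatExpr k X → RatExpr k Y
  | .const c => .const c
  | .var x => .var (f x)
  | .add r s => .add (r.rename f) (s.rename f)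
  | .mul r s => .mul (r.rename f) (s.rename f)
  | .inv r => .inv (r.rename f)

/-- The formal sum of a list of rational expressions. -/
def sumList {k X : Type*} [CommRing k] : List (RatExpr k X) → RatExpr k X
  | [] => .const 0
  | e :: l => .add e (sumList l)

/-- The substitution `X^(1)_ℓ ↦ X'^(1)_ℓ` (primed copy in the left summand), keeping the
other variables. -/
def primeMap {G : ℕ} (g₁ : ℕ) (g : Fin G → ℕ) :
    (Fin g₁) ⊕ (Σ i : Fin G, Fin (g i)) →
    (Fin g₁) ⊕ ((Fin g₁) ⊕ (Σ i : Fin G, Fin (g i))) :=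
  Sum.elim Sum.inl (fun w => Sum.inr (Sum.inr w))

/-- The partial difference-differential operator `Δ^(1)_j` with respect to the `j`-th
variable of the first part, mapping rational expressions in `X^(1) ∪ ⋯ ∪ X^(G)` to rational
expressions in `X'^(1) ∪ (X^(1) ∪ ⋯ ∪ X^(G))`:
`Δ(α) = 0`, `Δ(X^(1)_ℓ) = δ_{ℓj}`, `Δ(X^(i)_ℓ) = 0` for `i ≥ 2`, `Δ(r+s) = Δr + Δs`,
`Δ(rs) = r'·Δs + Δr·s` and `Δ(r⁻¹) = −(r')⁻¹·Δr·r⁻¹`. -/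
def deltaOne {k : Type*} [CommRing k] {G : ℕ} {g₁ : ℕ} {g : Fin G → ℕ} (j : Fin g₁) :
    RatExpr k ((Fin g₁) ⊕ (Σ i : Fin G, Fin (g i))) →
    RatExpr k ((Fin g₁) ⊕ ((Fin g₁) ⊕ (Σ i : Fin G, Fin (g i))))
  | .const _ => .const 0
  | .var (.inl ℓ) => if ℓ = j then .const 1 else .const 0
  | .var (.inr _) => .const 0
  | .add r s => .add (deltaOne j r) (deltaOne j s)
  | .mul r s => .add (.mul (r.rename (primeMap g₁ g)) (deltaOne j s))
      (.mul (deltaOne j r) (s.rename Sum.inr))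
  | .inv r => .mul (.const (-1))
      (.mul (.mul (.inv (r.rename (primeMap g₁ g))) (deltaOne j r))
        (.inv (r.rename Sum.inr)))


/-! ### Auxiliary lemmas for Statement 17 -/

open scoped Kronecker

section EvalLemmas

variable {k X Y R S : Type*} [CommRing k] [Ring R] [Ring S] [Algebra k R] [Algebra k S]

lemma RatExpr.eval_rename' (h : X → Y) (f : Y → R) (r : RatExpr k X) :
    (r.rename (k := k) h).eval f = r.eval (fun x => f (h x)) := by
  induction r <;> simp [RatExpr.rename, RatExpr.eval, *]

lemma ringInverse_map (φ : R →ₐ[k] S) {a : R} (h : IsUnit a) :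
    φ (Ring.inverse a) = Ring.inverse (φ a) := by
  obtain ⟨u, rfl⟩ := h
  have h1 : φ ↑u = ↑((Units.map (φ : R →* S)) u) := rfl
  rw [Ring.inverse_unit, h1, Ring.inverse_unit, Units.coe_map_inv]
  rfl

lemma RatExpr.eval_algHom (φ : R →ₐ[k] S) (f : X → R) :
    ∀ (r : RatExpr k X) (E : R), r.eval f = some E → r.eval (fun x => φ (f x)) = some (φ E)
  | .const c, E, h => by
    simp only [RatExpr.eval, Option.some_inj] at h ⊢
    rw [← h, AlgHom.commutes]
  | .var x, E, h => by
    simp only [RatExpr.eval, Option.some_inj] at h ⊢; rw [← h]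
  | .add r s, E, h => by
    simp only [RatExpr.eval, Option.bind_eq_some_iff, Option.map_eq_some_iff] at h ⊢
    obtain ⟨a, ha, b, hb, rfl⟩ := h
    exact ⟨φ a, eval_algHom φ f r a ha, φ b, eval_algHom φ f s b hb, (map_add φ a b).symm⟩
  | .mul r s, E, h => by
    simp only [RatExpr.eval, Option.bind_eq_some_iff, Option.map_eq_some_iff] at h ⊢
    obtain ⟨a, ha, b, hb, rfl⟩ := h
    exact ⟨φ a, eval_algHom φ f r a ha, φ b, eval_algHom φ f s b hb, (map_mul φ a b).symm⟩
  | .inv r, E, h => by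
    simp only [RatExpr.eval, Option.bind_eq_some_iff] at h ⊢
    obtain ⟨a, ha, hb⟩ := h
    split_ifs at hb with hu
    obtain rfl : Ring.inverse a = E := Option.some_inj.mp hb
    exact ⟨φ a, eval_algHom φ f r a ha, by rw [if_pos (hu.map φ), ringInverse_map φ hu]⟩

lemma eval_sumList_ofFn (F : X → R) :
    ∀ {m : ℕ} (f : Fin m → RatExpr k X) (E : Fin m → R),
      (∀ j, (f j).eval F = some (E j)) →
      (sumList (List.ofFn f)).eval F = some (∑ j, E j) := by
  intro m
  induction m with
  | zero => intro f E _; simp [List.ofFn_zero, sumList, RatExpr.eval]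
  | succ m ih =>
    intro f E h
    have hrest := ih (fun j => f j.succ) (fun j => E j.succ) (fun j => h j.succ)
    rw [List.ofFn_succ]
    simp only [sumList, RatExpr.eval, h 0, hrest, Option.bind_some, Option.map_some,
      Option.some_inj]
    rw [Fin.sum_univ_succ]

end EvalLemmas

section Psi

variable (k : Type*) [CommRing k]
variable (m e P : Type*) [Fintype m] [DecidableEq m] [Fintype e] [DecidableEq e]
  [Fintype P] [DecidableEq P]

/-- `M ↦ M ⊗ₖ 1` as an algebra homomorphism. -/
def tensorRightOneHom : Matrix m m k →ₐ[k] Matrix (m × e) (m × e) k where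
  toFun M := M ⊗ₖ (1 : Matrix e e k)
  map_one' := Matrix.one_kronecker_one
  map_mul' M N := by rw [← Matrix.mul_kronecker_mul, one_mul]
  map_zero' := Matrix.zero_kronecker 1
  map_add' M N := Matrix.add_kronecker M N 1
  commutes' c := by
    show ((algebraMap k (Matrix m m k) c) ⊗ₖ (1 : Matrix e e k)) = _
    rw [Algebra.algebraMap_eq_smul_one, Matrix.smul_kronecker, Matrix.one_kronecker_one,
      Algebra.algebraMap_eq_smul_one]

/-- `M ↦ 1 ⊗ₖ M` as an algebra homomorphism. -/
def tensorLeftOneHom : Matrix m m k →ₐ[k] Matrix (e × m) (e × m) k where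
  toFun M := (1 : Matrix e e k) ⊗ₖ M
  map_one' := Matrix.one_kronecker_one
  map_mul' M N := by rw [← Matrix.mul_kronecker_mul, one_mul]
  map_zero' := Matrix.kronecker_zero 1
  map_add' M N := Matrix.kronecker_add 1 M N
  commutes' c := by
    show ((1 : Matrix e e k) ⊗ₖ (algebraMap k (Matrix m m k) c)) = _
    rw [Algebra.algebraMap_eq_smul_one, Matrix.kronecker_smul, Matrix.one_kronecker_one,
      Algebra.algebraMap_eq_smul_one]

/-- The reindexing `(m × P) × e ≃ (m × e) × P`. -/
def sigmaR : (m × P) × e ≃ (m × e) × P where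
  toFun x := ((x.1.1, x.2), x.1.2)
  invFun y := ((y.1.1, y.2), y.1.2)
  left_inv := fun _ => rfl
  right_inv := fun _ => rfl

/-- The reindexing `e × (m × P) ≃ (e × m) × P`. -/
def sigmaL : e × (m × P) ≃ (e × m) × P where
  toFun x := ((x.1, x.2.1), x.2.2)
  invFun y := (y.1.1, (y.1.2, y.2))
  left_inv := fun _ => rfl
  right_inv := fun _ => rfl

/-- Embedding `Matrix (m × P) → Matrix ((m × e) × P)`, inserting an identity factor
on the right of the first slot. -/
noncomputable def psiR : Matrix (m × P) (m × P) k →ₐ[k] Matrix ((m × e) × P) ((m × e) × P) k :=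
  (Matrix.reindexAlgEquiv k k (sigmaR m e P)).toAlgHom.comp (tensorRightOneHom k (m × P) e)

/-- Embedding `Matrix (m × P) → Matrix ((e × m) × P)`, inserting an identity factor
on the left of the first slot. -/
noncomputable def psiL : Matrix (m × P) (m × P) k →ₐ[k] Matrix ((e × m) × P) ((e × m) × P) k :=
  (Matrix.reindexAlgEquiv k k (sigmaL m e P)).toAlgHom.comp (tensorLeftOneHom k (m × P) e)

variable {k m e P}

lemma psiR_apply (M : Matrix (m × P) (m × P) k) (x y : (m × e) × P) :
    psiR k m e P M x y
      = M (x.1.1, x.2) (y.1.1, y.2) * (if x.1.2 = y.1.2 then (1 : k) else 0) := by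
  simp [psiR, tensorRightOneHom, sigmaR, Matrix.one_apply, Matrix.reindex_apply,
    Matrix.submatrix_apply, Matrix.kroneckerMap_apply]

lemma psiL_apply (M : Matrix (m × P) (m × P) k) (x y : (e × m) × P) :
    psiL k m e P M x y
      = (if x.1.1 = y.1.1 then (1 : k) else 0) * M (x.1.2, x.2) (y.1.2, y.2) := by
  simp [psiL, tensorLeftOneHom, sigmaL, Matrix.one_apply, Matrix.reindex_apply,
    Matrix.submatrix_apply, Matrix.kroneckerMap_apply]

end Psi

section Tau

variable {k : Type*} [Field k] {G : ℕ} {n : Fin G → ℕ}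

lemma psiR_tauFst {m e : Type*} [Fintype m] [DecidableEq m] [Fintype e] [DecidableEq e]
    (A : Matrix m m k) :
    psiR k m e (∀ j, Fin (n j)) (tauFst n A) = tauFst n (A ⊗ₖ (1 : Matrix e e k)) := by
  ext x y
  rw [psiR_apply]
  simp only [tauFst, Matrix.of_apply, Matrix.kroneckerMap_apply, Matrix.one_apply]
  ring

lemma psiL_tauFst {m e : Type*} [Fintype m] [DecidableEq m] [Fintype e] [DecidableEq e]
    (A : Matrix m m k) :
    psiL k m e (∀ j, Fin (n j)) (tauFst n A) = tauFst n ((1 : Matrix e e k) ⊗ₖ A) := by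
  ext x y
  rw [psiL_apply]
  simp only [tauFst, Matrix.of_apply, Matrix.kroneckerMap_apply, Matrix.one_apply]
  ring

lemma psiR_tauTail {m e : Type*} [Fintype m] [DecidableEq m] [Fintype e] [DecidableEq e]
    (i : Fin G) (B : Matrix (Fin (n i)) (Fin (n i)) k) :
    psiR k m e (∀ j, Fin (n j)) (tauTail n i B) = tauTail (d := m × e) n i B := by
  ext x y
  rw [psiR_apply]
  simp only [tauTail, Matrix.of_apply, Prod.ext_iff]
  by_cases h1 : x.1.1 = y.1.1 <;> by_cases h2 : x.1.2 = y.1.2 <;> simp [h1, h2]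

lemma psiL_tauTail {m e : Type*} [Fintype m] [DecidableEq m] [Fintype e] [DecidableEq e]
    (i : Fin G) (B : Matrix (Fin (n i)) (Fin (n i)) k) :
    psiL k m e (∀ j, Fin (n j)) (tauTail n i B) = tauTail (d := e × m) n i B := by
  ext x y
  rw [psiL_apply]
  simp only [tauTail, Matrix.of_apply, Prod.ext_iff]
  by_cases h1 : x.1.1 = y.1.1 <;> by_cases h2 : x.1.2 = y.1.2 <;> simp [h1, h2, mul_assoc]

lemma tauFst_one {d : Type*} [Fintype d] [DecidableEq d] :
    tauFst (k := k) n (1 : Matrix d d k) = 1 := by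
  ext x y
  simp only [tauFst, Matrix.of_apply, Matrix.one_apply, Prod.ext_iff]
  by_cases h1 : x.1 = y.1 <;> by_cases h2 : x.2 = y.2 <;> simp [h1, h2]

lemma tauFst_smul {d : Type*} [Fintype d] [DecidableEq d] (c : k) (A : Matrix d d k) :
    tauFst n (c • A) = c • tauFst n A := by
  ext x y
  simp [tauFst, smul_eq_mul, mul_assoc]

lemma tauFst_fromBlocks {d : Type*} [Fintype d] [DecidableEq d] (A B C D : Matrix d d k) :
    tauFst n (Matrix.fromBlocks A B C D) =
      Matrix.reindex (Equiv.sumProdDistrib d d (∀ j, Fin (n j))).symm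
        (Equiv.sumProdDistrib d d (∀ j, Fin (n j))).symm
        (Matrix.fromBlocks (tauFst n A) (tauFst n B) (tauFst n C) (tauFst n D)) := by
  ext x y
  rcases x with ⟨x1 | x1, α⟩ <;> rcases y with ⟨y1 | y1, β⟩ <;>
    simp [tauFst, Matrix.reindex_apply, Matrix.submatrix_apply]

lemma tauTail_sum {d : Type*} [Fintype d] [DecidableEq d] (i : Fin G)
    (B : Matrix (Fin (n i)) (Fin (n i)) k) :
    tauTail (d := d ⊕ d) n i B =
      Matrix.reindex (Equiv.sumProdDistrib d d (∀ j, Fin (n j))).symm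
        (Equiv.sumProdDistrib d d (∀ j, Fin (n j))).symm
        (Matrix.fromBlocks (tauTail (d := d) n i B) 0 0 (tauTail (d := d) n i B)) := by
  ext x y
  rcases x with ⟨x1 | x1, α⟩ <;> rcases y with ⟨y1 | y1, β⟩ <;>
    simp [tauTail, Matrix.reindex_apply, Matrix.submatrix_apply]

end Tau

section KeyInduction

variable {k : Type*} [Field k] {G : ℕ} {g₁ : ℕ} {g n : Fin G → ℕ} {n₁ n₁' : ℕ}

lemma tauFst_zero {d : Type*} [Fintype d] [DecidableEq d] :
    tauFst (k := k) n (0 : Matrix d d k) = 0 := by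
  ext x y
  simp [tauFst]

/-- The combined assignment sending `X'^(1)_ℓ ↦ τ₁(a'_ℓ ⊗ I)`, `X^(1)_ℓ ↦ τ₁(I ⊗ a_ℓ)`,
and `X^(i)_ℓ ↦ τ_i(a₂ i ℓ)` for `i ≥ 2`. -/
def Fas (a : Fin g₁ → Matrix (Fin n₁) (Fin n₁) k)
    (a' : Fin g₁ → Matrix (Fin n₁') (Fin n₁') k)
    (a₂ : ∀ i, Fin (g i) → Matrix (Fin (n i)) (Fin (n i)) k) :
    (Fin g₁) ⊕ ((Fin g₁) ⊕ (Σ i : Fin G, Fin (g i))) →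
      Matrix ((Fin n₁' × Fin n₁) × ∀ j, Fin (n j)) ((Fin n₁' × Fin n₁) × ∀ j, Fin (n j)) k :=
  Sum.elim (fun ℓ => tauFst n (a' ℓ ⊗ₖ (1 : Matrix (Fin n₁) (Fin n₁) k)))
    (Sum.elim (fun ℓ => tauFst n ((1 : Matrix (Fin n₁') (Fin n₁') k) ⊗ₖ a ℓ))
      (fun w => tauTail n w.1 (a₂ w.1 w.2)))

theorem key_ind (a : Fin g₁ → Matrix (Fin n₁) (Fin n₁) k)
    (a' : Fin g₁ → Matrix (Fin n₁') (Fin n₁') k)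
    (a₂ : ∀ i, Fin (g i) → Matrix (Fin (n i)) (Fin (n i)) k)
    (v : Fin g₁ → k)
    (s : RatExpr k ((Fin g₁) ⊕ (Σ i : Fin G, Fin (g i)))) :
    ∀ (E₁ E₂ : Matrix ((Fin n₁' × Fin n₁) × ∀ j, Fin (n j))
        ((Fin n₁' × Fin n₁) × ∀ j, Fin (n j)) k),
      s.eval (fun x => Fas a a' a₂ (primeMap g₁ g x)) = some E₁ →
      s.eval (fun x => Fas a a' a₂ (Sum.inr x)) = some E₂ →
      ∃ ed : Fin g₁ → Matrix ((Fin n₁' × Fin n₁) × ∀ j, Fin (n j))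
          ((Fin n₁' × Fin n₁) × ∀ j, Fin (n j)) k,
        (∀ j, (deltaOne j s).eval (Fas a a' a₂) = some (ed j)) ∧
        s.eval (Sum.elim
            (fun ℓ => tauFst n (Matrix.fromBlocks
              (a' ℓ ⊗ₖ (1 : Matrix (Fin n₁) (Fin n₁) k))
              (v ℓ • (1 : Matrix (Fin n₁' × Fin n₁) (Fin n₁' × Fin n₁) k))
              0
              ((1 : Matrix (Fin n₁') (Fin n₁') k) ⊗ₖ a ℓ)))
            (fun w => tauTail n w.1 (a₂ w.1 w.2)))
          = some ((Matrix.reindexAlgEquiv k k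
              (Equiv.sumProdDistrib (Fin n₁' × Fin n₁) (Fin n₁' × Fin n₁)
                (∀ j, Fin (n j))).symm)
            (Matrix.fromBlocks E₁ (∑ j, v j • ed j) 0 E₂)) := by
  set Φ := Matrix.reindexAlgEquiv k k
    (Equiv.sumProdDistrib (Fin n₁' × Fin n₁) (Fin n₁' × Fin n₁) (∀ j, Fin (n j))).symm with hΦ
  have hΦapp : ∀ M, Φ M = Matrix.reindex
      (Equiv.sumProdDistrib (Fin n₁' × Fin n₁) (Fin n₁' × Fin n₁) (∀ j, Fin (n j))).symm
      (Equiv.sumProdDistrib (Fin n₁' × Fin n₁) (Fin n₁' × Fin n₁) (∀ j, Fin (n j))).symm M :=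
    fun _ => rfl
  induction s with
  | const c =>
    intro E₁ E₂ h₁ h₂
    simp only [RatExpr.eval, Option.some_inj] at h₁ h₂
    subst h₁; subst h₂
    refine ⟨fun _ => 0, fun j => by simp [deltaOne, RatExpr.eval, map_zero], ?_⟩
    simp only [RatExpr.eval, Option.some_inj, smul_zero, Finset.sum_const_zero]
    have hb : Matrix.fromBlocks (algebraMap k _ c) 0 0 (algebraMap k _ c)
        = algebraMap k (Matrix (((Fin n₁' × Fin n₁) × ∀ j, Fin (n j)) ⊕
            ((Fin n₁' × Fin n₁) × ∀ j, Fin (n j)))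
            (((Fin n₁' × Fin n₁) × ∀ j, Fin (n j)) ⊕
            ((Fin n₁' × Fin n₁) × ∀ j, Fin (n j))) k) c := by
      rw [Algebra.algebraMap_eq_smul_one, Algebra.algebraMap_eq_smul_one,
        ← Matrix.fromBlocks_one (l := (Fin n₁' × Fin n₁) × ∀ j, Fin (n j)),
        Matrix.fromBlocks_smul]
      simp
    rw [hb, AlgEquiv.commutes]
  | var x =>
    intro E₁ E₂ h₁ h₂
    simp only [RatExpr.eval, Option.some_inj] at h₁ h₂
    subst h₁; subst h₂
    rcases x with ℓ | w
    · refine ⟨fun j => if ℓ = j then 1 else 0, fun j => ?_, ?_⟩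
      · by_cases h : ℓ = j <;> simp [deltaOne, h, RatExpr.eval, map_one, map_zero]
      · have hsum : (∑ j, v j • (if ℓ = j then (1 : Matrix ((Fin n₁' × Fin n₁) × ∀ j, Fin (n j))
            ((Fin n₁' × Fin n₁) × ∀ j, Fin (n j)) k) else 0)) = v ℓ • 1 := by
          simp [smul_ite]
        rw [hsum]
        simp only [RatExpr.eval, Sum.elim_inl, Sum.elim_inr, Option.some_inj, Fas, primeMap]
        rw [tauFst_fromBlocks, hΦapp, tauFst_smul, tauFst_one, tauFst_zero]
    · refine ⟨fun _ => 0, fun j => by simp [deltaOne, RatExpr.eval, map_zero], ?_⟩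
      simp only [RatExpr.eval, Sum.elim_inr, Option.some_inj, smul_zero,
        Finset.sum_const_zero, Fas, primeMap]
      rw [tauTail_sum, hΦapp]
  | add r s ihr ihs =>
    intro E₁ E₂ h₁ h₂
    simp only [RatExpr.eval, Option.bind_eq_some_iff, Option.map_eq_some_iff] at h₁ h₂
    obtain ⟨A₁, hA₁, B₁, hB₁, rfl⟩ := h₁
    obtain ⟨A₂, hA₂, B₂, hB₂, rfl⟩ := h₂
    obtain ⟨edr, hedr, hr⟩ := ihr A₁ A₂ hA₁ hA₂
    obtain ⟨eds, heds, hs⟩ := ihs B₁ B₂ hB₁ hB₂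
    refine ⟨fun j => edr j + eds j, fun j => ?_, ?_⟩
    · simp [deltaOne, RatExpr.eval, hedr j, heds j]
    · have hc : (∑ j, v j • edr j) + (∑ j, v j • eds j)
          = ∑ j, v j • (edr j + eds j) := by
        rw [← Finset.sum_add_distrib]
        exact Finset.sum_congr rfl fun j _ => (smul_add _ _ _).symm
      have hXY : Matrix.fromBlocks A₁ (∑ j, v j • edr j) 0 A₂
            + Matrix.fromBlocks B₁ (∑ j, v j • eds j) 0 B₂
          = Matrix.fromBlocks (A₁ + B₁) (∑ j, v j • (edr j + eds j)) 0 (A₂ + B₂) := by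
        rw [Matrix.fromBlocks_add]
        simp [hc]
      simp only [RatExpr.eval, hr, hs, Option.bind_some, Option.map_some, Option.some_inj]
      rw [← map_add Φ, hXY]
  | mul r s ihr ihs =>
    intro E₁ E₂ h₁ h₂
    simp only [RatExpr.eval, Option.bind_eq_some_iff, Option.map_eq_some_iff] at h₁ h₂
    obtain ⟨A₁, hA₁, B₁, hB₁, rfl⟩ := h₁
    obtain ⟨A₂, hA₂, B₂, hB₂, rfl⟩ := h₂
    obtain ⟨edr, hedr, hr⟩ := ihr A₁ A₂ hA₁ hA₂
    obtain ⟨eds, heds, hs⟩ := ihs B₁ B₂ hB₁ hB₂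
    refine ⟨fun j => A₁ * eds j + edr j * B₂, fun j => ?_, ?_⟩
    · simp only [deltaOne, RatExpr.eval, RatExpr.eval_rename']
      simp [hA₁, hB₂, hedr j, heds j]
    · have hc : A₁ * (∑ j, v j • eds j) + (∑ j, v j • edr j) * B₂
          = ∑ j, v j • (A₁ * eds j + edr j * B₂) := by
        rw [Finset.mul_sum, Finset.sum_mul, ← Finset.sum_add_distrib]
        refine Finset.sum_congr rfl fun j _ => ?_
        rw [smul_add, mul_smul_comm, smul_mul_assoc]
      have hXY : Matrix.fromBlocks A₁ (∑ j, v j • edr j) 0 A₂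
            * Matrix.fromBlocks B₁ (∑ j, v j • eds j) 0 B₂
          = Matrix.fromBlocks (A₁ * B₁) (∑ j, v j • (A₁ * eds j + edr j * B₂)) 0 (A₂ * B₂) := by
        rw [Matrix.fromBlocks_multiply]
        simp [hc]
      simp only [RatExpr.eval, hr, hs, Option.bind_some, Option.map_some, Option.some_inj]
      rw [← map_mul Φ, hXY]
  | inv r ih =>
    intro E₁ E₂ h₁ h₂
    simp only [RatExpr.eval, Option.bind_eq_some_iff] at h₁ h₂
    obtain ⟨A₁, hA₁, h₁'⟩ := h₁
    obtain ⟨A₂, hA₂, h₂'⟩ := h₂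
    split_ifs at h₁' with hu₁
    split_ifs at h₂' with hu₂
    obtain rfl := Option.some_inj.mp h₁'
    obtain rfl := Option.some_inj.mp h₂'
    obtain ⟨ed, hed, hr⟩ := ih A₁ A₂ hA₁ hA₂
    obtain ⟨i₁⟩ := hu₁.nonempty_invertible
    obtain ⟨i₂⟩ := hu₂.nonempty_invertible
    letI iZ := Matrix.fromBlocksZero₂₁Invertible A₁ (∑ j, v j • ed j) A₂
    have hZ : IsUnit (Matrix.fromBlocks A₁ (∑ j, v j • ed j) 0 A₂) := isUnit_of_invertible _
    have hΦZ : IsUnit (Φ (Matrix.fromBlocks A₁ (∑ j, v j • ed j) 0 A₂)) :=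
      hZ.map Φ.toAlgHom.toRingHom.toMonoidHom
    have hinv : Ring.inverse (Φ (Matrix.fromBlocks A₁ (∑ j, v j • ed j) 0 A₂))
        = Φ (Ring.inverse (Matrix.fromBlocks A₁ (∑ j, v j • ed j) 0 A₂)) :=
      (ringInverse_map Φ.toAlgHom hZ).symm
    refine ⟨fun j => -(Ring.inverse A₁ * ed j * Ring.inverse A₂), fun j => ?_, ?_⟩
    · simp only [deltaOne, RatExpr.eval, RatExpr.eval_rename']
      simp [hA₁, hA₂, hed j, hu₁, hu₂, map_neg, map_one, neg_one_mul]
    · have hcorner : (∑ j, v j • -(Ring.inverse A₁ * ed j * Ring.inverse A₂))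
          = -(⅟A₁ * (∑ j, v j • ed j) * ⅟A₂) := by
        rw [Finset.mul_sum, Finset.sum_mul, ← Finset.sum_neg_distrib]
        refine Finset.sum_congr rfl fun j _ => ?_
        rw [Ring.inverse_invertible, Ring.inverse_invertible, smul_neg, mul_smul_comm,
          smul_mul_assoc]
      simp only [RatExpr.eval, hr, Option.bind_some]
      rw [if_pos hΦZ, hinv]
      refine congrArg (fun M => some (Φ M)) ?_
      rw [Ring.inverse_invertible, Matrix.invOf_fromBlocks_zero₂₁_eq, hcorner,
        Ring.inverse_invertible A₁, Ring.inverse_invertible A₂]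

end KeyInduction
/-- Proposition 5.1, the difference-differential formula. Suppose
`(a^(1), a^(2), …, a^(G))` and `(a'^(1), a^(2), …, a^(G))` lie in the mp-domains of `r` at
levels `(n₁, n₂, …, n_G)` and `(n₁', n₂, …, n_G)` respectively, and let `v ∈ k^{g₁}`. Then
the evaluations of `r` at `(a'^(1) ⊗ I, tail)` and `(I ⊗ a^(1), tail)`, and of
`v·Δ^(1)(r) = Σ_j v_j Δ^(1)_j(r)` at the corresponding point, are all defined, the tuple of
`2×2` block matrices `A_j = [[a'^(1)_j ⊗ I, v_j·I],[0, I ⊗ a^(1)_j]]` together with the tail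
lies in the mp-domain of `r`, and under the natural block identification
`r(A, tail)^mp = [[r(a'⊗I, tail)^mp, (v·Δ^(1)r)(a'⊗I, I⊗a, tail)], [0, r(I⊗a, tail)^mp]]`. -/
theorem mp_difference_differential_formula {k : Type*} [Field k] [CharZero k]
    {G : ℕ} (g₁ : ℕ) (g n : Fin G → ℕ) (n₁ n₁' : ℕ)
    (r : RatExpr k ((Fin g₁) ⊕ (Σ i : Fin G, Fin (g i))))
    (a : Fin g₁ → Matrix (Fin n₁) (Fin n₁) k)
    (a' : Fin g₁ → Matrix (Fin n₁') (Fin n₁') k)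
    (a₂ : ∀ i, Fin (g i) → Matrix (Fin (n i)) (Fin (n i)) k)
    (ha : ∃ E, mpEvalFst g₁ g n r a a₂ = some E)
    (ha' : ∃ E, mpEvalFst g₁ g n r a' a₂ = some E)
    (v : Fin g₁ → k) :
    ∃ (E₁ E₂ Ed : Matrix ((Fin n₁' × Fin n₁) × ∀ j, Fin (n j))
        ((Fin n₁' × Fin n₁) × ∀ j, Fin (n j)) k),
      mpEvalFst g₁ g n r (fun ℓ => a' ℓ ⊗ₖ (1 : Matrix (Fin n₁) (Fin n₁) k)) a₂ = some E₁ ∧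
      mpEvalFst g₁ g n r (fun ℓ => (1 : Matrix (Fin n₁') (Fin n₁') k) ⊗ₖ a ℓ) a₂ = some E₂ ∧
      RatExpr.eval
        (Sum.elim (fun ℓ => tauFst n (a' ℓ ⊗ₖ (1 : Matrix (Fin n₁) (Fin n₁) k)))
          (Sum.elim (fun ℓ => tauFst n ((1 : Matrix (Fin n₁') (Fin n₁') k) ⊗ₖ a ℓ))
            (fun w => tauTail n w.1 (a₂ w.1 w.2))))
        (sumList (List.ofFn fun j => RatExpr.mul (.const (v j)) (deltaOne j r)))
        = some Ed ∧
      mpEvalFst g₁ g n r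
        (fun j => Matrix.fromBlocks
          (a' j ⊗ₖ (1 : Matrix (Fin n₁) (Fin n₁) k))
          (v j • (1 : Matrix (Fin n₁' × Fin n₁) (Fin n₁' × Fin n₁) k))
          0
          ((1 : Matrix (Fin n₁') (Fin n₁') k) ⊗ₖ a j)) a₂
      = some (Matrix.reindex (Equiv.sumProdDistrib _ _ _).symm
          (Equiv.sumProdDistrib _ _ _).symm
          (Matrix.fromBlocks E₁ Ed 0 E₂)) := by
  
  obtain ⟨E', hE'⟩ := ha'
  obtain ⟨E, hE⟩ := ha
  have hE'0 : RatExpr.eval (Sum.elim (fun j => tauFst n (a' j))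
      (fun w : Σ i : Fin G, Fin (g i) => tauTail n w.1 (a₂ w.1 w.2))) r = some E' := hE'
  have hE0 : RatExpr.eval (Sum.elim (fun j => tauFst n (a j))
      (fun w : Σ i : Fin G, Fin (g i) => tauTail n w.1 (a₂ w.1 w.2))) r = some E := hE
  have hE'1 := RatExpr.eval_algHom (psiR k (Fin n₁') (Fin n₁) (∀ j, Fin (n j)))
    (Sum.elim (fun j => tauFst n (a' j))
      (fun w : Σ i : Fin G, Fin (g i) => tauTail n w.1 (a₂ w.1 w.2))) r E' hE'0
  have hE1 := RatExpr.eval_algHom (psiL k (Fin n₁) (Fin n₁') (∀ j, Fin (n j)))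
    (Sum.elim (fun j => tauFst n (a j))
      (fun w : Σ i : Fin G, Fin (g i) => tauTail n w.1 (a₂ w.1 w.2))) r E hE0
  have hg1 : (fun x : (Fin g₁) ⊕ (Σ i : Fin G, Fin (g i)) =>
      psiR k (Fin n₁') (Fin n₁) (∀ j, Fin (n j))
      ((Sum.elim (fun j => tauFst n (a' j))
        (fun w : Σ i : Fin G, Fin (g i) => tauTail n w.1 (a₂ w.1 w.2))) x))
      = Sum.elim (fun ℓ => tauFst n (a' ℓ ⊗ₖ (1 : Matrix (Fin n₁) (Fin n₁) k)))
        (fun w => tauTail n w.1 (a₂ w.1 w.2)) := by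
    funext x
    rcases x with ℓ | w
    · simp only [Sum.elim_inl]; exact psiR_tauFst (a' ℓ)
    · simp only [Sum.elim_inr]; exact psiR_tauTail w.1 (a₂ w.1 w.2)
  have hg2 : (fun x : (Fin g₁) ⊕ (Σ i : Fin G, Fin (g i)) =>
      psiL k (Fin n₁) (Fin n₁') (∀ j, Fin (n j))
      ((Sum.elim (fun j => tauFst n (a j))
        (fun w : Σ i : Fin G, Fin (g i) => tauTail n w.1 (a₂ w.1 w.2))) x))
      = Sum.elim (fun ℓ => tauFst n ((1 : Matrix (Fin n₁') (Fin n₁') k) ⊗ₖ a ℓ))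
        (fun w => tauTail n w.1 (a₂ w.1 w.2)) := by
    funext x
    rcases x with ℓ | w
    · simp only [Sum.elim_inl]; exact psiL_tauFst (a ℓ)
    · simp only [Sum.elim_inr]; exact psiL_tauTail w.1 (a₂ w.1 w.2)
  rw [hg1] at hE'1
  rw [hg2] at hE1
  have hb1 : (fun x => Fas a a' a₂ (primeMap g₁ g x))
      = Sum.elim (fun ℓ => tauFst n (a' ℓ ⊗ₖ (1 : Matrix (Fin n₁) (Fin n₁) k)))
        (fun w => tauTail n w.1 (a₂ w.1 w.2)) := by
    funext x; rcases x with ℓ | w <;> rfl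
  have hb2 : (fun x => Fas a a' a₂ (Sum.inr x))
      = Sum.elim (fun ℓ => tauFst n ((1 : Matrix (Fin n₁') (Fin n₁') k) ⊗ₖ a ℓ))
        (fun w => tauTail n w.1 (a₂ w.1 w.2)) := by
    funext x; rcases x with ℓ | w <;> rfl
  obtain ⟨ed, hed, hblock⟩ := key_ind a a' a₂ v r
    (psiR k (Fin n₁') (Fin n₁) (∀ j, Fin (n j)) E')
    (psiL k (Fin n₁) (Fin n₁') (∀ j, Fin (n j)) E)
    (by rw [hb1]; exact hE'1) (by rw [hb2]; exact hE1)
  refine ⟨psiR k (Fin n₁') (Fin n₁) (∀ j, Fin (n j)) E',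
    psiL k (Fin n₁) (Fin n₁') (∀ j, Fin (n j)) E, ∑ j, v j • ed j, hE'1, hE1, ?_, hblock⟩
  exact eval_sumList_ofFn (Fas a a' a₂) _ (fun j => v j • ed j)
    (fun j => by simp only [RatExpr.eval, hed j, Option.bind_some, Option.map_some,
      Option.some_inj]; rw [Algebra.smul_def])
end
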